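/- For d ≥ 3, m_d(n) ≥ dn/2 + O(1); precisely, every percolating set of size n^{d-1} in d-neighbour bootstrap percolation on [n]^d takes at least d⌊n/2⌋ − d time steps to percolate. -/

import Mathlib

/-- The grid `[n]^d = {1,...,n}^d`, embedded in `ℕ^d`. -/
def gridSet (n d : ℕ) : Set (Fin d → ℕ) := {v | ∀ i, 1 ≤ v i ∧ v i ≤ n}

/-- Adjacency: differ by 1 in exactly one coordinate. -/
def gridAdj {d : ℕ} (u v : Fin d → ℕ) : Prop :=
  ∃ j, (u j = v j + 1 ∨ v j = u j + 1) ∧ ∀ i, i ≠ j → u i = v i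

/-- One round of `r`-neighbour bootstrap percolation on `[n]^d`. -/
def bpStep (n d r : ℕ) (S : Set (Fin d → ℕ)) : Set (Fin d → ℕ) :=
  S ∪ {v ∈ gridSet n d | r ≤ {u ∈ S | gridAdj u v}.ncard}

/-- Infected set after `t` rounds, starting from `A`. -/
def infected (n d r : ℕ) (A : Set (Fin d → ℕ)) (t : ℕ) : Set (Fin d → ℕ) :=
  (bpStep n d r)^[t] A

/-- The closure of `A`: all eventually infected vertices. -/
def bpClosure (n d r : ℕ) (A : Set (Fin d → ℕ)) : Set (Fin d → ℕ) :=
  ⋃ t, infected n d r A t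

/-- `A` percolates if every grid vertex is eventually infected. -/
def percolates (n d r : ℕ) (A : Set (Fin d → ℕ)) : Prop :=
  gridSet n d ⊆ bpClosure n d r A

/-- Percolation time: least `t` with the whole grid infected. -/
noncomputable def percTime (n d r : ℕ) (A : Set (Fin d → ℕ)) : ℕ :=
  sInf {t | gridSet n d ⊆ infected n d r A t}

/-- `V_k`: grid vertices of coordinate sum `k`. -/
def hyperplane (n d k : ℕ) : Set (Fin d → ℕ) := {v ∈ gridSet n d | ∑ i, v i = k}

/-- The "cyclic combination" set `A = ⋃_{i=1}^d V_{in}`. -/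
def diagUnion (n d : ℕ) : Set (Fin d → ℕ) :=
  ⋃ i ∈ Finset.Icc 1 d, hyperplane n d (i * n)

open Finset
open scoped Classical

noncomputable section BP

variable {d : ℕ}

lemma gridAdj_symm {u v : Fin d → ℕ} (h : gridAdj u v) : gridAdj v u := by
  obtain ⟨j, h1, h2⟩ := h
  exact ⟨j, h1.symm, fun i hi => (h2 i hi).symm⟩

/-- ℕ distance on coordinates. -/
def nd' (a b : ℕ) : ℕ := (a - b) + (b - a)

/-- ℓ¹ distance. -/
def distN (u v : Fin d → ℕ) : ℕ := ∑ i, nd' (u i) (v i)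

lemma distN_triangle_adj {u v c : Fin d → ℕ} (h : gridAdj u v) :
    distN v c ≤ 1 + distN u c := by
  obtain ⟨j, h1, h2⟩ := h
  have key : ∀ i, nd' (v i) (c i) ≤ nd' (v i) (u i) + nd' (u i) (c i) := by
    intro i; unfold nd'; omega
  have hsum : distN v c ≤ (∑ i, nd' (v i) (u i)) + distN u c := by
    unfold distN
    rw [← Finset.sum_add_distrib]
    exact Finset.sum_le_sum fun i _ => key i
  have h1' : ∑ i, nd' (v i) (u i) = nd' (v j) (u j) := by
    apply Finset.sum_eq_single_of_mem j (Finset.mem_univ j)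
    intro i _ hij
    have := h2 i hij; unfold nd'; omega
  have : nd' (v j) (u j) = 1 := by unfold nd'; omega
  omega

/-- The grid as a Finset. -/
def gridF (n d : ℕ) : Finset (Fin d → ℕ) := Fintype.piFinset fun _ => Finset.Icc 1 n

lemma mem_gridF {n : ℕ} {v : Fin d → ℕ} : v ∈ gridF n d ↔ ∀ i, 1 ≤ v i ∧ v i ≤ n := by
  simp [gridF, Fintype.mem_piFinset]

lemma coe_gridF (n : ℕ) : (↑(gridF n d) : Set (Fin d → ℕ)) = gridSet n d := by
  ext v; simp [mem_gridF, gridSet]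

lemma card_gridF (n : ℕ) : (gridF n d).card = n ^ d := by
  simp [gridF, Fintype.card_piFinset]

/-- degree of `v` into `F`. -/
def degF (F : Finset (Fin d → ℕ)) (v : Fin d → ℕ) : ℕ :=
  (F.filter fun u => gridAdj u v).card

/-- ordered adjacent pairs inside `F`. -/
def EF (F : Finset (Fin d → ℕ)) : ℕ := ∑ v ∈ F, degF F v

def stepF (n d : ℕ) (F : Finset (Fin d → ℕ)) : Finset (Fin d → ℕ) :=
  F ∪ (gridF n d).filter fun v => d ≤ degF F v

lemma ncard_eq_degF (F : Finset (Fin d → ℕ)) (v : Fin d → ℕ) :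
    {u | u ∈ F ∧ gridAdj u v}.ncard = degF F v := by
  have : {u | u ∈ F ∧ gridAdj u v} = ↑(F.filter fun u => gridAdj u v) := by
    ext u; simp
  rw [this, Set.ncard_coe_finset]; rfl

lemma coe_stepF (n : ℕ) (F : Finset (Fin d → ℕ)) :
    (↑(stepF n d F) : Set (Fin d → ℕ)) = bpStep n d d ↑F := by
  ext v
  simp only [stepF, bpStep, Finset.coe_union, Set.mem_union, Finset.mem_coe,
    Finset.mem_filter, Set.mem_setOf_eq, ← coe_gridF, ncard_eq_degF]

lemma coe_iter_stepF (n : ℕ) (F : Finset (Fin d → ℕ)) (t : ℕ) :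
    infected n d d (↑F) t = ↑((stepF n d)^[t] F) := by
  induction t with
  | zero => rfl
  | succ t ih =>
    have h1 : ((bpStep n d d)^[t] (↑F : Set (Fin d → ℕ))) = ↑((stepF n d)^[t] F) := ih
    rw [infected, Function.iterate_succ_apply', Function.iterate_succ_apply', h1, coe_stepF]


/-- Explicit description of grid-neighbours. -/
lemma filter_adj_gridF {n : ℕ} {v : Fin d → ℕ} (hv : v ∈ gridF n d) :
    (gridF n d).filter (fun u => gridAdj u v) =
      Finset.univ.biUnion (fun j =>
        (if v j < n then {Function.update v j (v j + 1)} else ∅) ∪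
        (if 1 < v j then {Function.update v j (v j - 1)} else ∅)) := by
  rw [mem_gridF] at hv
  ext u
  simp only [Finset.mem_filter, Finset.mem_biUnion, Finset.mem_univ, true_and,
    Finset.mem_union]
  constructor
  · rintro ⟨hu, j, hj1, hj2⟩
    rw [mem_gridF] at hu
    refine ⟨j, ?_⟩
    rcases hj1 with h | h
    · left
      have hun : u = Function.update v j (v j + 1) := by
        funext i
        by_cases hij : i = j
        · subst hij; simp [Function.update_self, h]
        · simp [Function.update_of_ne hij, hj2 i hij]
      have : v j < n := by have := (hu j).2; omega
      simp [this, hun]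
    · right
      have hun : u = Function.update v j (v j - 1) := by
        funext i
        by_cases hij : i = j
        · subst hij; simp [Function.update_self]; omega
        · simp [Function.update_of_ne hij, hj2 i hij]
      have : 1 < v j := by have := (hu j).1; omega
      simp [this, hun]
  · rintro ⟨j, h | h⟩
    · by_cases hc : v j < n
      · simp only [if_pos hc, Finset.mem_singleton] at h
        subst h
        constructor
        · rw [mem_gridF]; intro i
          by_cases hij : i = j
          · subst hij; simp [Function.update_self]; have := (hv i).1; omega
          · simp [Function.update_of_ne hij]; exact hv i
        · exact ⟨j, Or.inl (by simp [Function.update_self]),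
            fun i hij => by simp [Function.update_of_ne hij]⟩
      · simp [if_neg hc] at h
    · by_cases hc : 1 < v j
      · simp only [if_pos hc, Finset.mem_singleton] at h
        subst h
        constructor
        · rw [mem_gridF]; intro i
          by_cases hij : i = j
          · subst hij; simp [Function.update_self]; have := (hv i).2; omega
          · simp [Function.update_of_ne hij]; exact hv i
        · exact ⟨j, Or.inr (by simp [Function.update_self]; omega),
            fun i hij => by simp [Function.update_of_ne hij]⟩
      · simp [if_neg hc] at h

lemma degF_gridF_eq {n : ℕ} {v : Fin d → ℕ} (hv : v ∈ gridF n d) :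
    degF (gridF n d) v =
      ∑ j, ((if v j < n then 1 else 0) + (if 1 < v j then 1 else 0)) := by
  rw [mem_gridF] at hv
  rw [degF, filter_adj_gridF (mem_gridF.2 hv)]
  rw [Finset.card_biUnion]
  · apply Finset.sum_congr rfl
    intro j _
    have hdisj : Disjoint
        (if v j < n then ({Function.update v j (v j + 1)} : Finset (Fin d → ℕ)) else ∅)
        (if 1 < v j then ({Function.update v j (v j - 1)} : Finset (Fin d → ℕ)) else ∅) := by
      by_cases h1 : v j < n
      · by_cases h2 : 1 < v j
        · rw [if_pos h1, if_pos h2, Finset.disjoint_singleton]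
          intro h
          have := congrFun h j
          simp only [Function.update_self] at this
          omega
        · simp [if_neg h2]
      · simp [if_neg h1]
    rw [Finset.card_union_of_disjoint hdisj]
    congr 1 <;> split <;> simp
  · intro j _ j' _ hjj'
    apply Finset.disjoint_left.2
    intro u hu hu'
    have h1 : u j ≠ v j := by
      rcases Finset.mem_union.1 hu with h | h <;> split at h <;>
        simp_all [Function.update_self] <;> omega
    have h2 : u j = v j := by
      rcases Finset.mem_union.1 hu' with h | h <;> split at h <;>
        simp_all [Function.update_of_ne (Ne.symm hjj')]
    exact h1 h2

lemma card_filter_lt {n : ℕ} (hn : 1 ≤ n) (j : Fin d) :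
    ((gridF n d).filter fun v => v j < n).card = (n - 1) * n ^ (d - 1) := by
  have heq : (gridF n d).filter (fun v => v j < n) =
      Fintype.piFinset (Function.update (fun _ : Fin d => Finset.Icc 1 n) j
        (Finset.Icc 1 (n - 1))) := by
    ext v
    simp only [Finset.mem_filter, mem_gridF, Fintype.mem_piFinset]
    constructor
    · rintro ⟨h1, h2⟩ i
      by_cases hij : i = j
      · subst hij; simp [Function.update_self, Finset.mem_Icc]
        have := h1 i; omega
      · simp [Function.update_of_ne hij, Finset.mem_Icc]; exact h1 i
    · intro h
      constructor
      · intro i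
        by_cases hij : i = j
        · subst hij; have := h i; simp [Function.update_self, Finset.mem_Icc] at this; omega
        · have := h i; simp [Function.update_of_ne hij, Finset.mem_Icc] at this; exact this
      · have := h j; simp [Function.update_self, Finset.mem_Icc] at this; omega
  rw [heq, Fintype.card_piFinset]
  simp only [Function.apply_update (fun _ s => Finset.card s)]
  rw [Finset.prod_update_of_mem (Finset.mem_univ j)]
  have h1 : (Finset.Icc 1 (n - 1)).card = n - 1 := by simp [Nat.card_Icc]
  have h2 : ∏ i ∈ Finset.univ \ {j}, ((fun _ : Fin d => Finset.Icc 1 n) i).card = n ^ (d - 1) := by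
    have hc : (Finset.univ \ ({j} : Finset (Fin d))).card = d - 1 := by
      rw [Finset.card_sdiff_of_subset (by simp), Finset.card_univ]; simp
    rw [Finset.prod_const, hc]
    congr 1
    simp [Nat.card_Icc]
  rw [h1, h2]

lemma card_filter_gt {n : ℕ} (hn : 1 ≤ n) (j : Fin d) :
    ((gridF n d).filter fun v => 1 < v j).card = (n - 1) * n ^ (d - 1) := by
  have heq : (gridF n d).filter (fun v => 1 < v j) =
      Fintype.piFinset (Function.update (fun _ : Fin d => Finset.Icc 1 n) j
        (Finset.Icc 2 n)) := by
    ext v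
    simp only [Finset.mem_filter, mem_gridF, Fintype.mem_piFinset]
    constructor
    · rintro ⟨h1, h2⟩ i
      by_cases hij : i = j
      · subst hij; simp [Function.update_self, Finset.mem_Icc]
        have := h1 i; omega
      · simp [Function.update_of_ne hij, Finset.mem_Icc]; exact h1 i
    · intro h
      constructor
      · intro i
        by_cases hij : i = j
        · subst hij; have := h i; simp [Function.update_self, Finset.mem_Icc] at this; omega
        · have := h i; simp [Function.update_of_ne hij, Finset.mem_Icc] at this; exact this
      · have := h j; simp [Function.update_self, Finset.mem_Icc] at this; omega
  rw [heq, Fintype.card_piFinset]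
  simp only [Function.apply_update (fun _ s => Finset.card s)]
  rw [Finset.prod_update_of_mem (Finset.mem_univ j)]
  have h1 : (Finset.Icc 2 n).card = n - 1 := by simp [Nat.card_Icc]
  have h2 : ∏ i ∈ Finset.univ \ {j}, ((fun _ : Fin d => Finset.Icc 1 n) i).card = n ^ (d - 1) := by
    have hc : (Finset.univ \ ({j} : Finset (Fin d))).card = d - 1 := by
      rw [Finset.card_sdiff_of_subset (by simp), Finset.card_univ]; simp
    rw [Finset.prod_const, hc]
    congr 1
    simp [Nat.card_Icc]
  rw [h1, h2]

lemma EF_gridF {n : ℕ} (hn : 1 ≤ n) :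
    EF (gridF n d) = 2 * d * ((n - 1) * n ^ (d - 1)) := by
  unfold EF
  calc ∑ v ∈ gridF n d, degF (gridF n d) v
      = ∑ v ∈ gridF n d, ∑ j, ((if v j < n then 1 else 0) + (if 1 < v j then 1 else 0)) :=
        Finset.sum_congr rfl fun v hv => degF_gridF_eq hv
    _ = ∑ j, ∑ v ∈ gridF n d, ((if v j < n then 1 else 0) + (if 1 < v j then 1 else 0)) :=
        Finset.sum_comm
    _ = ∑ j : Fin d, 2 * ((n - 1) * n ^ (d - 1)) := by
        apply Finset.sum_congr rfl
        intro j _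
        rw [Finset.sum_add_distrib]
        rw [← Finset.card_filter, ← Finset.card_filter]
        rw [card_filter_lt hn j, card_filter_gt hn j]
        ring
    _ = 2 * d * ((n - 1) * n ^ (d - 1)) := by
        rw [Finset.sum_const, Finset.card_univ]
        simp [Fintype.card_fin]; ring

lemma degF_gridF_ge {n : ℕ} (hn : 2 ≤ n) {v : Fin d → ℕ} (hv : v ∈ gridF n d) :
    d ≤ degF (gridF n d) v := by
  rw [degF_gridF_eq hv]
  have hv' := mem_gridF.1 hv
  calc d = ∑ _j : Fin d, 1 := by simp
    _ ≤ _ := by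
        apply Finset.sum_le_sum
        intro j _
        have := hv' j
        by_cases h : v j < n
        · simp [h]
        · have : 1 < v j := by omega
          simp [this]

lemma degF_gridF_ge_succ {n : ℕ} (hn : 2 ≤ n) {v : Fin d → ℕ} (hv : v ∈ gridF n d)
    (j0 : Fin d) (h1 : 1 < v j0) (h2 : v j0 < n) :
    d + 1 ≤ degF (gridF n d) v := by
  rw [degF_gridF_eq hv]
  have hv' := mem_gridF.1 hv
  rw [← Finset.add_sum_erase _ _ (Finset.mem_univ j0)]
  have hterm : (if v j0 < n then 1 else 0) + (if 1 < v j0 then 1 else 0) = 2 := by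
    simp [h1, h2]
  rw [hterm]
  have : ∑ j ∈ Finset.univ.erase j0, 1 ≤
      ∑ j ∈ Finset.univ.erase j0, ((if v j < n then 1 else 0) + (if 1 < v j then 1 else 0)) := by
    apply Finset.sum_le_sum
    intro j _
    have := hv' j
    by_cases h : v j < n
    · simp [h]
    · have : 1 < v j := by omega
      simp [this]
  have hcard : (Finset.univ.erase j0).card = d - 1 := by
    rw [Finset.card_erase_of_mem (Finset.mem_univ j0)]
    simp
  have hd : 1 ≤ d := j0.pos
  simp only [Finset.sum_const, smul_eq_mul, mul_one, hcard] at this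
  omega

lemma gridAdj_comm (u v : Fin d → ℕ) : gridAdj u v ↔ gridAdj v u :=
  ⟨gridAdj_symm, gridAdj_symm⟩

lemma degF_eq_sum (F : Finset (Fin d → ℕ)) (v : Fin d → ℕ) :
    degF F v = ∑ u ∈ F, if gridAdj u v then 1 else 0 := by
  rw [degF, Finset.card_filter]

lemma EF_union {F W : Finset (Fin d → ℕ)} (hdisj : Disjoint F W) :
    EF (F ∪ W) = EF F + 2 * (∑ w ∈ W, degF F w) + EF W := by
  have hdeg : ∀ v, degF (F ∪ W) v = degF F v + degF W v := by
    intro v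
    rw [degF, degF, degF, Finset.filter_union,
      Finset.card_union_of_disjoint (Finset.disjoint_filter_filter hdisj)]
  have hswap : ∑ v ∈ F, degF W v = ∑ w ∈ W, degF F w := by
    simp only [degF_eq_sum]
    rw [Finset.sum_comm]
    apply Finset.sum_congr rfl
    intro u _
    apply Finset.sum_congr rfl
    intro v _
    simp [gridAdj_comm u v]
  rw [EF, Finset.sum_union hdisj]
  simp only [hdeg]
  rw [Finset.sum_add_distrib, Finset.sum_add_distrib]
  rw [EF, EF, hswap]
  ring

lemma EF_eq_zero_no_adj {F : Finset (Fin d → ℕ)} (h : EF F = 0)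
    {u v : Fin d → ℕ} (hu : u ∈ F) (hv : v ∈ F) (hadj : gridAdj u v) : False := by
  rw [EF, Finset.sum_eq_zero_iff] at h
  have := h v hv
  rw [degF, Finset.card_eq_zero] at this
  have : u ∈ (∅ : Finset (Fin d → ℕ)) := this ▸ Finset.mem_filter.2 ⟨hu, hadj⟩
  simp at this

/-- the infected Finset after `t` rounds. -/
def FF (n d : ℕ) (AF : Finset (Fin d → ℕ)) (t : ℕ) : Finset (Fin d → ℕ) :=
  (stepF n d)^[t] AF

/-- newly infected at round `t`. -/
def WW (n d : ℕ) (AF : Finset (Fin d → ℕ)) (t : ℕ) : Finset (Fin d → ℕ) :=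
  FF n d AF (t + 1) \ FF n d AF t

/-- edges from the new set to the old. -/
def σσ (n d : ℕ) (AF : Finset (Fin d → ℕ)) (t : ℕ) : ℕ :=
  ∑ w ∈ WW n d AF t, degF (FF n d AF t) w

variable {n : ℕ} {AF : Finset (Fin d → ℕ)}

lemma FF_succ (t : ℕ) : FF n d AF (t + 1) = stepF n d (FF n d AF t) := by
  rw [FF, Function.iterate_succ_apply']; rfl

lemma FF_subset_succ (t : ℕ) : FF n d AF t ⊆ FF n d AF (t + 1) := by
  rw [FF_succ]; exact Finset.subset_union_left

lemma FF_mono {s t : ℕ} (h : s ≤ t) : FF n d AF s ⊆ FF n d AF t := by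
  induction t with
  | zero => simp_all
  | succ t ih =>
    rcases Nat.lt_or_ge s (t+1) with h' | h'
    · exact (ih (by omega)).trans (FF_subset_succ t)
    · have : s = t + 1 := by omega
      subst this; exact Finset.Subset.refl _

lemma FF_subset_grid (hsub : AF ⊆ gridF n d) (t : ℕ) : FF n d AF t ⊆ gridF n d := by
  induction t with
  | zero => exact hsub
  | succ t ih =>
    rw [FF_succ, stepF]
    exact Finset.union_subset ih (Finset.filter_subset _ _)

lemma FF_union_WW (t : ℕ) : FF n d AF (t + 1) = FF n d AF t ∪ WW n d AF t := by
  rw [WW, Finset.union_sdiff_of_subset (FF_subset_succ t)]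

lemma disjoint_FF_WW (t : ℕ) : Disjoint (FF n d AF t) (WW n d AF t) :=
  Finset.disjoint_sdiff

lemma card_FF_succ (t : ℕ) :
    (FF n d AF (t + 1)).card = (FF n d AF t).card + (WW n d AF t).card := by
  rw [FF_union_WW t, Finset.card_union_of_disjoint (disjoint_FF_WW t)]

lemma EF_FF_succ (t : ℕ) :
    EF (FF n d AF (t + 1)) = EF (FF n d AF t) + 2 * σσ n d AF t + EF (WW n d AF t) := by
  rw [FF_union_WW t, EF_union (disjoint_FF_WW t)]; rfl

lemma deg_new (t : ℕ) {w : Fin d → ℕ} (hw : w ∈ WW n d AF t) :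
    d ≤ degF (FF n d AF t) w := by
  rw [WW, Finset.mem_sdiff, FF_succ, stepF, Finset.mem_union] at hw
  rcases hw.1 with h | h
  · exact absurd h hw.2
  · exact (Finset.mem_filter.1 h).2

lemma sigma_lower (t : ℕ) : d * (WW n d AF t).card ≤ σσ n d AF t := by
  rw [σσ]
  calc d * (WW n d AF t).card = ∑ _w ∈ WW n d AF t, d := by rw [Finset.sum_const]; ring
    _ ≤ _ := Finset.sum_le_sum fun w hw => deg_new t hw

lemma grid_balance (hn : 1 ≤ n) (hd : 1 ≤ d) :
    2 * d * (gridF n d : Finset (Fin d → ℕ)).card = EF (gridF n d) + 2 * d * n ^ (d - 1) := by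
  rw [card_gridF, EF_gridF hn]
  have : n ^ d = (n - 1) * n ^ (d - 1) + n ^ (d - 1) := by
    have h1 : n ^ d = n * n ^ (d - 1) := by
      conv_lhs => rw [show d = (d - 1) + 1 by omega]
      rw [pow_succ]; ring
    have h2 : (n - 1) * n ^ (d - 1) + n ^ (d - 1) = ((n - 1) + 1) * n ^ (d - 1) := by ring
    rw [h1, h2, Nat.sub_add_cancel hn]
  rw [this]; ring

lemma upper_invariant (hn : 1 ≤ n) (hsub : AF ⊆ gridF n d)
    (hcard : AF.card = n ^ (d - 1)) (t : ℕ) :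
    2 * d * (FF n d AF t).card ≤ EF (FF n d AF t) + 2 * d * n ^ (d - 1) := by
  induction t with
  | zero =>
    have : FF n d AF 0 = AF := rfl
    rw [this, hcard]; omega
  | succ t ih =>
    have h1 := card_FF_succ (n := n) (AF := AF) t
    have h2 := EF_FF_succ (n := n) (AF := AF) t
    have h3 := sigma_lower (n := n) (AF := AF) t
    have : 2 * d * (FF n d AF (t+1)).card
        = 2 * d * (FF n d AF t).card + 2 * (d * (WW n d AF t).card) := by rw [h1]; ring
    rw [this, h2]
    omega

lemma rigidity (hn : 1 ≤ n) (hd : 1 ≤ d) (hsub : AF ⊆ gridF n d)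
    (hcard : AF.card = n ^ (d - 1)) (T : ℕ) (hT : FF n d AF T = gridF n d) :
    EF AF = 0 ∧ ∀ t, σσ n d AF t = d * (WW n d AF t).card ∧ EF (WW n d AF t) = 0 := by
  have heq : ∀ k, k ≤ T →
      2 * d * (FF n d AF (T - k)).card = EF (FF n d AF (T - k)) + 2 * d * n ^ (d - 1) := by
    intro k
    induction k with
    | zero =>
      intro _
      simpa [hT] using grid_balance (n := n) (d := d) hn hd
    | succ k ih =>
      intro hk
      have hk' : k ≤ T := by omega
      have ht : T - k = (T - (k + 1)) + 1 := by omega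
      set t := T - (k + 1) with htdef
      have heqk := ih hk'
      rw [ht] at heqk
      have h1 := card_FF_succ (n := n) (AF := AF) t
      have h2 := EF_FF_succ (n := n) (AF := AF) t
      have h3 := sigma_lower (n := n) (AF := AF) t
      have h4 := upper_invariant hn hsub hcard (n := n) (AF := AF) t
      have h5 : 2 * d * (FF n d AF (t+1)).card
          = 2 * d * (FF n d AF t).card + 2 * (d * (WW n d AF t).card) := by rw [h1]; ring
      omega
  have hstep : ∀ t, t < T → σσ n d AF t = d * (WW n d AF t).card ∧ EF (WW n d AF t) = 0 := by
    intro t ht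
    have e1 := heq (T - t) (by omega)
    have e2 := heq (T - t - 1) (by omega)
    have ht1 : T - (T - t) = t := by omega
    have ht2 : T - (T - t - 1) = t + 1 := by omega
    rw [ht1] at e1
    rw [ht2] at e2
    have h1 := card_FF_succ (n := n) (AF := AF) t
    have h2 := EF_FF_succ (n := n) (AF := AF) t
    have h3 := sigma_lower (n := n) (AF := AF) t
    have h5 : 2 * d * (FF n d AF (t+1)).card
        = 2 * d * (FF n d AF t).card + 2 * (d * (WW n d AF t).card) := by rw [h1]; ring
    omega
  have hgrid : ∀ t, T ≤ t → FF n d AF t = gridF n d := by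
    intro t ht
    apply Finset.Subset.antisymm (FF_subset_grid hsub t)
    rw [← hT]
    exact FF_mono ht
  constructor
  · have e0 := heq T (le_refl T)
    simp only [Nat.sub_self] at e0
    have : FF n d AF 0 = AF := rfl
    rw [this, hcard] at e0
    omega
  · intro t
    rcases Nat.lt_or_ge t T with h | h
    · exact hstep t h
    · have hW : WW n d AF t = ∅ := by
        rw [WW, hgrid t h, hgrid (t+1) (by omega), Finset.sdiff_self]
      rw [σσ, hW]
      simp [EF]

lemma deg_new_exact (hn : 1 ≤ n) (hd : 1 ≤ d) (hsub : AF ⊆ gridF n d)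
    (hcard : AF.card = n ^ (d - 1)) (T : ℕ) (hT : FF n d AF T = gridF n d)
    (t : ℕ) {w : Fin d → ℕ} (hw : w ∈ WW n d AF t) :
    degF (FF n d AF t) w = d := by
  obtain ⟨-, hrig⟩ := rigidity hn hd hsub hcard T hT
  obtain ⟨hσ, -⟩ := hrig t
  have hsum : ∑ w ∈ WW n d AF t, (d : ℕ) = ∑ w ∈ WW n d AF t, degF (FF n d AF t) w := by
    rw [← σσ]
    rw [hσ, Finset.sum_const, smul_eq_mul, mul_comm]
  have := (Finset.sum_eq_sum_iff_of_le (fun w hw => deg_new t hw)).1 hsum w hw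
  exact this.symm

lemma time_bound (hn4 : 4 ≤ n) (hd : 3 ≤ d)
    (hsub : AF ⊆ gridF n d) (hcard : AF.card = n ^ (d - 1))
    (hne : ∀ v ∈ gridF n d, ∃ t, v ∈ FF n d AF t) :
    ∀ t, gridF n d ⊆ FF n d AF t → 1 + d * (n / 2 - 1) ≤ t := by
  have hn1 : 1 ≤ n := by omega
  have hn2 : 2 ≤ n := by omega
  have hd1 : 1 ≤ d := by omega
  -- the time function
  set tf : (Fin d → ℕ) → ℕ := fun v => sInf {t | v ∈ FF n d AF t} with htf
  have hmemtf : ∀ v ∈ gridF n d, v ∈ FF n d AF (tf v) := by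
    intro v hv
    exact Nat.sInf_mem (hne v hv)
  have htf_le : ∀ (v : Fin d → ℕ) (t : ℕ), v ∈ FF n d AF t → tf v ≤ t := by
    intro v t hv
    exact Nat.sInf_le hv
  have hle_mem : ∀ v ∈ gridF n d, ∀ t, tf v ≤ t → v ∈ FF n d AF t := by
    intro v hv t ht
    exact FF_mono ht (hmemtf v hv)
  -- stabilization time
  set T : ℕ := (gridF n d).sup tf with hTdef
  have htfT : ∀ v ∈ gridF n d, tf v ≤ T := fun v hv => Finset.le_sup hv
  have hT : FF n d AF T = gridF n d := by
    apply Finset.Subset.antisymm (FF_subset_grid hsub T)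
    intro v hv
    exact hle_mem v hv T (htfT v hv)
  obtain ⟨hEA, hrig⟩ := rigidity hn1 hd1 hsub hcard T hT
  -- time = 0 iff in A
  have htf0 : ∀ v ∈ gridF n d, (tf v = 0 ↔ v ∈ AF) := by
    intro v hv
    constructor
    · intro h
      have := hmemtf v hv
      rw [h] at this
      exact this
    · intro h
      exact Nat.le_zero.1 (htf_le v 0 h)
  -- adjacent vertices have distinct times
  have hadj_ne : ∀ u v : Fin d → ℕ, u ∈ gridF n d → v ∈ gridF n d →
      gridAdj u v → tf u ≠ tf v := by
    intro u v hu hv hadj heq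
    rcases Nat.eq_zero_or_pos (tf v) with h0 | hpos
    · have hv0 : v ∈ AF := (htf0 v hv).1 h0
      have hu0 : u ∈ AF := (htf0 u hu).1 (by omega)
      exact EF_eq_zero_no_adj hEA hu0 hv0 hadj
    · set s := tf v - 1 with hs
      have hv1 : v ∈ WW n d AF s := by
        rw [WW, Finset.mem_sdiff]
        constructor
        · apply hle_mem v hv; omega
        · intro hmem
          have := htf_le v s hmem
          omega
      have hu1 : u ∈ WW n d AF s := by
        rw [WW, Finset.mem_sdiff]
        constructor
        · apply hle_mem u hu; omega
        · intro hmem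
          have := htf_le u s hmem
          omega
      exact EF_eq_zero_no_adj (hrig s).2 hu1 hv1 hadj
  -- existence of a strictly later neighbour at non-corners
  have hbig : ∀ v, v ∈ gridF n d → (¬ ∀ i, v i = 1 ∨ v i = n) →
      ∃ u, u ∈ gridF n d ∧ gridAdj u v ∧ tf v < tf u := by
    intro v hv hnc
    by_cases hvA : v ∈ AF
    · -- v is a seed : any grid neighbour works
      have hdeg := degF_gridF_ge hn2 hv
      have hpos : 0 < degF (gridF n d) v := by omega
      rw [degF, Finset.card_pos] at hpos
      obtain ⟨u, hu⟩ := hpos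
      rw [Finset.mem_filter] at hu
      refine ⟨u, hu.1, hu.2, ?_⟩
      have hv0 : tf v = 0 := (htf0 v hv).2 hvA
      have huA : u ∉ AF := by
        intro huA
        exact EF_eq_zero_no_adj hEA huA hvA hu.2
      have : tf u ≠ 0 := fun h => huA ((htf0 u hu.1).1 h)
      omega
    · -- v is not a seed : exactly d earlier neighbours, degree ≥ d+1
      have htpos : 0 < tf v := by
        rcases Nat.eq_zero_or_pos (tf v) with h | h
        · exact absurd ((htf0 v hv).1 h) hvA
        · exact h
      set t := tf v - 1 with ht
      have hvW : v ∈ WW n d AF t := by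
        rw [WW, Finset.mem_sdiff]
        constructor
        · apply hle_mem v hv; omega
        · intro hmem
          have := htf_le v t hmem
          omega
      have hdexact : degF (FF n d AF t) v = d :=
        deg_new_exact hn1 hd1 hsub hcard T hT t hvW
      obtain ⟨j0, hj0⟩ : ∃ i, ¬ (v i = 1 ∨ v i = n) := by
        by_contra h
        push_neg at h
        exact hnc fun i => h i
      have hvj0 := mem_gridF.1 hv j0
      have hdeg : d + 1 ≤ degF (gridF n d) v :=
        degF_gridF_ge_succ hn2 hv j0 (by omega) (by omega)
      have hsubfil : (FF n d AF t).filter (fun u => gridAdj u v) ⊆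
          (gridF n d).filter (fun u => gridAdj u v) :=
        Finset.filter_subset_filter _ (FF_subset_grid hsub t)
      have hcards : (((gridF n d).filter (fun u => gridAdj u v)) \ ((FF n d AF t).filter (fun u => gridAdj u v))).Nonempty := by
        rw [← Finset.card_pos, Finset.card_sdiff_of_subset hsubfil]
        have h1 : ((FF n d AF t).filter (fun u => gridAdj u v)).card = d := hdexact
        rw [h1]
        rw [degF] at hdeg
        omega
      obtain ⟨u, hu⟩ := hcards
      rw [Finset.mem_sdiff, Finset.mem_filter] at hu
      obtain ⟨⟨hugrid, huadj⟩, hunot⟩ := hu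
      refine ⟨u, hugrid, huadj, ?_⟩
      have hunotF : u ∉ FF n d AF t := by
        intro h
        exact hunot (Finset.mem_filter.2 ⟨h, huadj⟩)
      have htu : t < tf u := by
        by_contra h
        push_neg at h
        exact hunotF (hle_mem u hugrid t h)
      have := hadj_ne u v hugrid hv huadj
      omega
  -- the increasing chain to a corner
  have chain : ∀ k, ∀ v, v ∈ gridF n d → T - tf v ≤ k →
      ∃ c, c ∈ gridF n d ∧ (∀ i, c i = 1 ∨ c i = n) ∧ tf v + distN v c ≤ tf c := by
    intro k
    induction k with
    | zero =>
      intro v hv h0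
      by_cases hc : ∀ i, v i = 1 ∨ v i = n
      · refine ⟨v, hv, hc, ?_⟩
        have : distN v v = 0 := by simp [distN, nd']
        omega
      · obtain ⟨u, hu, _, htu⟩ := hbig v hv hc
        have := htfT u hu
        have := htfT v hv
        omega
    | succ k ih =>
      intro v hv hk
      by_cases hc : ∀ i, v i = 1 ∨ v i = n
      · refine ⟨v, hv, hc, ?_⟩
        have : distN v v = 0 := by simp [distN, nd']
        omega
      · obtain ⟨u, hu, huadj, htu⟩ := hbig v hv hc
        have hTu := htfT u hu
        obtain ⟨c, hcg, hcc, hle⟩ := ih u hu (by omega)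
        refine ⟨c, hcg, hcc, ?_⟩
        have htri : distN v c ≤ 1 + distN u c := distN_triangle_adj huadj
        omega
  -- the central healthy vertex
  set a := n / 2 with ha
  have ha2 : 2 ≤ a := by omega
  have han : a + 1 ≤ n := by omega
  set w0 : Fin d → ℕ := fun _ => a with hw0
  have hw0g : w0 ∈ gridF n d := mem_gridF.2 fun i => by simp [hw0]; omega
  set j0 : Fin d := ⟨0, by omega⟩ with hj0
  set w1 : Fin d → ℕ := Function.update w0 j0 (a + 1) with hw1
  have hw1g : w1 ∈ gridF n d := by
    rw [mem_gridF]
    intro i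
    by_cases hij : i = j0
    · subst hij; simp [hw1, Function.update_self]; omega
    · simp [hw1, Function.update_of_ne hij, hw0]; omega
  have hadj01 : gridAdj w1 w0 := by
    refine ⟨j0, Or.inl ?_, fun i hi => ?_⟩
    · simp [hw1, Function.update_self, hw0]
    · simp [hw1, Function.update_of_ne hi]
  obtain ⟨w, hwg, hwA, hwco⟩ : ∃ w, w ∈ gridF n d ∧ w ∉ AF ∧ ∀ i, w i = a ∨ w i = a + 1 := by
    by_cases h0 : w0 ∈ AF
    · refine ⟨w1, hw1g, ?_, ?_⟩
      · intro h1
        exact EF_eq_zero_no_adj hEA h1 h0 hadj01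
      · intro i
        by_cases hij : i = j0
        · subst hij; simp [hw1, Function.update_self]
        · simp [hw1, Function.update_of_ne hij, hw0]
    · exact ⟨w0, hw0g, h0, fun i => Or.inl rfl⟩
  -- conclusion
  intro t hgt
  have htw : 1 ≤ tf w := by
    have : tf w ≠ 0 := fun h => hwA ((htf0 w hwg).1 h)
    omega
  obtain ⟨c, hcg, hcc, hle⟩ := chain T w hwg (by omega)
  have hdist : d * (a - 1) ≤ distN w c := by
    rw [distN]
    calc d * (a - 1) = ∑ _i : Fin d, (a - 1) := by
          rw [Finset.sum_const, Finset.card_univ, Fintype.card_fin, smul_eq_mul, mul_comm]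
      _ ≤ _ := by
          apply Finset.sum_le_sum
          intro i _
          rcases hwco i with h | h <;> rcases hcc i with h' | h' <;>
            simp [nd', h, h'] <;> omega
  have htc : tf c ≤ t := htf_le c t (hgt hcg)
  omega

end BP

theorem min_time_lower_bound (n d : ℕ) (hn : 1 ≤ n) (hd : 3 ≤ d)
    (A : Set (Fin d → ℕ)) (hA : A ⊆ gridSet n d) (hperc : percolates n d d A)
    (hcard : A.ncard = n ^ (d - 1)) :
    d * (n / 2) - d ≤ percTime n d d A := by
  rcases Nat.lt_or_ge n 4 with hn4 | hn4
  · -- trivial for small n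
    interval_cases n <;> simp
  · classical
    have hAfin : A.Finite := by
      apply Set.Finite.subset (gridF n d).finite_toSet
      rw [coe_gridF]; exact hA
    set AF : Finset (Fin d → ℕ) := hAfin.toFinset with hAF
    have hcoe : (↑AF : Set (Fin d → ℕ)) = A := hAfin.coe_toFinset
    have hsubF : AF ⊆ gridF n d := by
      intro v hv
      have : v ∈ (↑AF : Set (Fin d → ℕ)) := hv
      rw [hcoe] at this
      have := hA this
      rw [← coe_gridF] at this
      exact this
    have hcardF : AF.card = n ^ (d - 1) := by
      rw [← hcard, ← hcoe, Set.ncard_coe_finset]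
    have hinf : ∀ t, infected n d d A t = ↑(FF n d AF t) := by
      intro t
      rw [← hcoe]
      exact coe_iter_stepF n AF t
    have hne : ∀ v ∈ gridF n d, ∃ t, v ∈ FF n d AF t := by
      intro v hv
      have hv' : v ∈ gridSet n d := by rw [← coe_gridF]; exact hv
      have := hperc hv'
      rw [bpClosure, Set.mem_iUnion] at this
      obtain ⟨t, ht⟩ := this
      rw [hinf t] at ht
      exact ⟨t, ht⟩
    -- nonemptiness of the percolation-time set
    have hTex : ∃ T, gridF n d ⊆ FF n d AF T := by
      refine ⟨(gridF n d).sup (fun v => sInf {t | v ∈ FF n d AF t}), ?_⟩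
      intro v hv
      have h1 : v ∈ FF n d AF (sInf {t | v ∈ FF n d AF t}) := Nat.sInf_mem (hne v hv)
      exact FF_mono (Finset.le_sup hv) h1
    obtain ⟨T', hT'⟩ := hTex
    have hT'' : gridSet n d ⊆ infected n d d A T' := by
      rw [hinf T', ← coe_gridF]
      exact fun v hv => hT' hv
    rw [percTime]
    apply le_csInf ⟨T', hT''⟩
    intro t ht
    have hgt : gridF n d ⊆ FF n d AF t := by
      intro v hv
      have : v ∈ gridSet n d := by rw [← coe_gridF]; exact hv
      have := ht this
      rw [hinf t] at this
      exact this
    have key : 1 + d * (n / 2 - 1) ≤ t := time_bound hn4 hd hsubF hcardF hne t hgt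
    have h2 : d * (n / 2 - 1) + d = d * (n / 2) := by
      rw [← Nat.mul_succ]
      congr 1
      omega
    set X := d * (n / 2 - 1) with hX
    set Y := d * (n / 2) with hY
    omega
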